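/- Let Λ_1, Λ_2 ⊂ ℝ^d be almost-orthogonal planes and let v be a vector whose angle with each of Λ_1 and Λ_2 is at most α, for some 0 < α ≤ 1/3. Then the angle between v and Λ_1 ∩ Λ_2 is at most 10α. -/

import Mathlib

open scoped BigOperators RealInnerProductSpace
open Filter

noncomputable section

abbrev Pt (d : ℕ) := EuclideanSpace ℝ (Fin d)

def Separated {d : ℕ} (S : Finset (Pt d)) : Prop :=
  ∀ p ∈ S, ∀ q ∈ S, p ≠ q → 1 ≤ dist p q

def IsKDistSet {d : ℕ} (k : ℕ) (S : Finset (Pt d)) : Prop :=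
  ∃ D : Finset ℝ, D.card ≤ k ∧ ∀ p ∈ S, ∀ q ∈ S, p ≠ q → dist p q ∈ D

def mDist (k d : ℕ) : ℕ :=
  sSup {n : ℕ | ∃ S : Finset (Pt d), S.card = n ∧ IsKDistSet k S}

def IsNearlyKDist {d : ℕ} (k : ℕ) (ε : ℝ) (S : Finset (Pt d)) : Prop :=
  Separated S ∧ ∃ t : ℕ → ℝ, (∀ i < k, 1 ≤ t i) ∧
    ∀ p ∈ S, ∀ q ∈ S, p ≠ q → ∃ i < k, dist p q ∈ Set.Icc (t i) (t i + ε)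

def Mnear (k d : ℕ) : ℕ :=
  sSup {M : ℕ | ∀ ε : ℝ, 0 < ε → ∃ S : Finset (Pt d), S.card = M ∧ IsNearlyKDist k ε S}

def vsAngle {d : ℕ} (v : Pt d) (Λ : Submodule ℝ (Pt d)) : ℝ :=
  sInf {θ : ℝ | ∃ w ∈ Λ, w ≠ 0 ∧ θ = InnerProductGeometry.angle v w}

def IsFlatAt {d : ℕ} (S : Finset (Pt d)) (p : Pt d) (j : ℕ) (α : ℝ) : Prop :=
  ∃ Λ : Submodule ℝ (Pt d), Module.finrank ℝ Λ = j ∧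
    ∀ q ∈ S, q ≠ p → vsAngle (p - q) Λ ≤ α

def Nflat (k d' d : ℕ) : ℕ :=
  sSup {N : ℕ | ∀ ε α : ℝ, 0 < ε → 0 < α →
    ∃ S : Finset (Pt d'), S.card = N ∧ IsNearlyKDist k ε S ∧ ∀ p ∈ S, IsFlatAt S p d α}

def turanNum (n s : ℕ) : ℕ :=
  n.choose 2 - ((n % s) * (n / s + 1).choose 2 + (s - n % s) * (n / s).choose 2)

open Classical in
def nearPairs {d : ℕ} (S : Finset (Pt d)) (k : ℕ) (ε : ℝ) (t : ℕ → ℝ) :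
    Finset (Pt d × Pt d) :=
  S.offDiag.filter (fun pq => ∃ i < k, dist pq.1 pq.2 ∈ Set.Icc (t i) (t i + ε))

def Mkdn (k d n : ℕ) : ℕ :=
  sSup {M : ℕ | ∃ (S : Finset (Pt d)) (t : ℕ → ℝ), S.card = n ∧ Separated S ∧
    (∀ i < k, 1 ≤ t i) ∧ (nearPairs S k 1 t).card = 2 * M}


def AlmostOrthogonal {d : ℕ} (Λ₁ Λ₂ : Submodule ℝ (Pt d)) : Prop :=
  ∃ (v : Fin d → Pt d) (a b c : ℕ), a ≤ b ∧ b ≤ c ∧ c ≤ d ∧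
    (LinearIndependent ℝ v ∧ Submodule.span ℝ (Set.range v) = ⊤) ∧
    (∀ i j : Fin d, i.val < b → j.val < b →
      (inner ℝ (v i) (v j) : ℝ) = (if i = j then (1 : ℝ) else 0)) ∧
    Submodule.span ℝ {x | ∃ i : Fin d, i.val < b ∧ x = v i} = Λ₁ ∧
    (∀ i j : Fin d, a ≤ i.val → i.val < c → a ≤ j.val → j.val < c →
      (inner ℝ (v i) (v j) : ℝ) = (if i = j then (1 : ℝ) else 0)) ∧
    Submodule.span ℝ {x | ∃ i : Fin d, a ≤ i.val ∧ i.val < c ∧ x = v i} = Λ₂ ∧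
    (∀ w ∈ Submodule.span ℝ {x | ∃ i : Fin d, i.val < a ∧ x = v i}, w ≠ 0 →
      vsAngle w Λ₂ ∈ Set.Icc (Real.pi / 2 - 0.01) (Real.pi / 2 + 0.01)) ∧
    (∀ w ∈ Submodule.span ℝ {x | ∃ i : Fin d, b ≤ i.val ∧ x = v i}, w ≠ 0 →
      vsAngle w Λ₁ ∈ Set.Icc (Real.pi / 2 - 0.01) (Real.pi / 2 + 0.01))

lemma vsAngle_bddBelow {d : ℕ} (v : Pt d) (Λ : Submodule ℝ (Pt d)) :
    BddBelow {θ : ℝ | ∃ w ∈ Λ, w ≠ 0 ∧ θ = InnerProductGeometry.angle v w} := by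
  refine ⟨0, ?_⟩
  rintro θ ⟨w, hw, hw0, rfl⟩
  exact InnerProductGeometry.angle_nonneg _ _

lemma proj_close {d : ℕ} (Λ : Submodule ℝ (Pt d)) (hΛ : Λ ≠ ⊥) (v : Pt d) (hv : v ≠ 0)
    {α : ℝ} (hα : 0 < α) (hα' : α ≤ 1 / 3) (h : vsAngle v Λ ≤ α) :
    ‖v - (Submodule.orthogonalProjectionOnto Λ v : Pt d)‖ ≤ α * ‖v‖ := by
  set P : Pt d := (Submodule.orthogonalProjectionOnto Λ v : Pt d) with hPdef
  have hP : ∀ w ∈ Λ, ⟪v - P, w⟫ = 0 := Submodule.starProjection_inner_eq_zero v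
  have hvpos : (0:ℝ) < ‖v‖ := norm_pos_iff.mpr hv
  have hPmem : P ∈ Λ := SetLike.coe_mem _
  have hpyth : ‖v‖ ^ 2 = ‖P‖ ^ 2 + ‖v - P‖ ^ 2 := by
    have h0 : ⟪P, v - P⟫ = 0 := by
      rw [real_inner_comm]; exact hP P hPmem
    have : v = P + (v - P) := by abel
    calc ‖v‖ ^ 2 = ‖P + (v - P)‖ ^ 2 := by rw [← this]
      _ = ‖P‖ ^ 2 + 2 * ⟪P, v - P⟫ + ‖v - P‖ ^ 2 := norm_add_sq_real _ _
      _ = ‖P‖ ^ 2 + ‖v - P‖ ^ 2 := by rw [h0]; ring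
  have hPle : ‖P‖ ≤ ‖v‖ := by nlinarith [norm_nonneg P, norm_nonneg v, sq_nonneg ‖v - P‖]
  set t : ℝ := ‖P‖ / ‖v‖ with htdef
  have ht0 : 0 ≤ t := by positivity
  have ht1 : t ≤ 1 := by rw [htdef, div_le_one hvpos]; exact hPle
  have hkey : Real.arccos t ≤ α := by
    refine le_trans ?_ h
    apply le_csInf
    · obtain ⟨w, hw, hw0⟩ := Submodule.ne_bot_iff Λ |>.mp hΛ
      exact ⟨InnerProductGeometry.angle v w, w, hw, hw0, rfl⟩
    · rintro θ ⟨w, hw, hw0, rfl⟩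
      have hwpos : (0:ℝ) < ‖w‖ := norm_pos_iff.mpr hw0
      have hinner : ⟪v, w⟫ = ⟪P, w⟫ := by
        have := hP w hw
        rw [inner_sub_left] at this
        linarith
      have hq : ⟪v, w⟫ / (‖v‖ * ‖w‖) ≤ t := by
        rw [htdef, div_le_div_iff₀ (by positivity) hvpos]
        have h1 : ⟪P, w⟫ ≤ ‖P‖ * ‖w‖ := real_inner_le_norm _ _
        nlinarith
      have hq1 : (-1:ℝ) ≤ ⟪v, w⟫ / (‖v‖ * ‖w‖) := by
        have := abs_real_inner_div_norm_mul_norm_le_one v w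
        rw [abs_le] at this
        exact this.1
      unfold InnerProductGeometry.angle
      rw [Real.arccos_eq_pi_div_two_sub_arcsin, Real.arccos_eq_pi_div_two_sub_arcsin]
      linarith [Real.monotone_arcsin hq]
  have hcos : Real.cos α ≤ t := by
    have h1 : Real.cos α ≤ Real.cos (Real.arccos t) :=
      Real.cos_le_cos_of_nonneg_of_le_pi (Real.arccos_nonneg t)
        (by linarith [Real.pi_gt_three]) hkey
    rwa [Real.cos_arccos (by linarith) ht1] at h1
  have hsin1 : Real.sin α ≤ α := Real.sin_le hα.le
  have hsin0 : 0 ≤ Real.sin α :=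
    Real.sin_nonneg_of_nonneg_of_le_pi hα.le (by linarith [Real.pi_gt_three])
  have hsc : Real.sin α ^ 2 + Real.cos α ^ 2 = 1 := Real.sin_sq_add_cos_sq α
  have hPge : Real.cos α * ‖v‖ ≤ ‖P‖ := by
    rw [htdef, le_div_iff₀ hvpos] at hcos
    linarith
  have hcosnn : 0 ≤ Real.cos α := Real.cos_nonneg_of_mem_Icc
    ⟨by linarith [Real.pi_gt_three], by linarith [Real.pi_gt_three]⟩
  have hsq : ‖v - P‖ ^ 2 ≤ (α * ‖v‖) ^ 2 := by
    have h1 : (Real.cos α * ‖v‖) * (Real.cos α * ‖v‖) ≤ ‖P‖ * ‖P‖ :=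
      mul_self_le_mul_self (by positivity) hPge
    have h2 : Real.sin α * Real.sin α ≤ α * α := mul_self_le_mul_self hsin0 hsin1
    nlinarith [sq_nonneg ‖v‖]
  nlinarith [norm_nonneg (v - P), sq_nonneg (‖v - P‖ - α * ‖v‖), sq_nonneg (‖v - P‖ + α * ‖v‖),
    mul_pos hα hvpos]

lemma near_orth_one {d : ℕ} {M Λ : Submodule ℝ (Pt d)}
    (h : ∀ w ∈ M, w ≠ 0 →
      vsAngle w Λ ∈ Set.Icc (Real.pi / 2 - 0.01) (Real.pi / 2 + 0.01))
    {w : Pt d} (hw : w ∈ M) {u : Pt d} (hu : u ∈ Λ) (hw0 : w ≠ 0) (hu0 : u ≠ 0) :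
    ⟪w, u⟫ ≤ (1 / 100) * (‖w‖ * ‖u‖) := by
  have hIcc := h w hw hw0
  have hmem : InnerProductGeometry.angle w u ∈
      {θ : ℝ | ∃ z ∈ Λ, z ≠ 0 ∧ θ = InnerProductGeometry.angle w z} := ⟨u, hu, hu0, rfl⟩
  have hle : vsAngle w Λ ≤ InnerProductGeometry.angle w u :=
    csInf_le (vsAngle_bddBelow w Λ) hmem
  have hang : Real.pi / 2 - 0.01 ≤ InnerProductGeometry.angle w u :=
    le_trans hIcc.1 hle
  have hcos : Real.cos (InnerProductGeometry.angle w u) ≤ Real.cos (Real.pi / 2 - 0.01) :=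
    Real.cos_le_cos_of_nonneg_of_le_pi (by norm_num; linarith [Real.pi_gt_three])
      (InnerProductGeometry.angle_le_pi w u) hang
  rw [Real.cos_pi_div_two_sub] at hcos
  have hsin : Real.sin 0.01 ≤ 0.01 := Real.sin_le (by norm_num)
  have hca : Real.cos (InnerProductGeometry.angle w u)
      = ⟪w, u⟫ / (‖w‖ * ‖u‖) := InnerProductGeometry.cos_angle w u
  have hN : (0:ℝ) < ‖w‖ * ‖u‖ := by
    have := norm_pos_iff.mpr hw0
    have := norm_pos_iff.mpr hu0
    positivity
  have : ⟪w, u⟫ / (‖w‖ * ‖u‖) ≤ 1 / 100 := by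
    rw [← hca]; linarith
  rw [div_le_iff₀ hN] at this
  linarith

lemma near_orth {d : ℕ} {M Λ : Submodule ℝ (Pt d)}
    (h : ∀ w ∈ M, w ≠ 0 →
      vsAngle w Λ ∈ Set.Icc (Real.pi / 2 - 0.01) (Real.pi / 2 + 0.01))
    {w : Pt d} (hw : w ∈ M) {u : Pt d} (hu : u ∈ Λ) :
    |⟪w, u⟫| ≤ (1 / 100) * (‖w‖ * ‖u‖) := by
  rcases eq_or_ne w 0 with rfl | hw0
  · simp
  rcases eq_or_ne u 0 with rfl | hu0
  · simp
  have h1 := near_orth_one h hw hu hw0 hu0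
  have h2 := near_orth_one h hw (Submodule.neg_mem Λ hu) hw0 (neg_ne_zero.mpr hu0)
  rw [inner_neg_right, norm_neg] at h2
  rw [abs_le]
  constructor <;> linarith


set_option maxHeartbeats 4000000 in
theorem stmt11 (d : ℕ) (Λ₁ Λ₂ : Submodule ℝ (Pt d))
    (hao : AlmostOrthogonal Λ₁ Λ₂) (v : Pt d) (α : ℝ)
    (hα : 0 < α) (hα' : α ≤ 1 / 3)
    (h₁ : vsAngle v Λ₁ ≤ α) (h₂ : vsAngle v Λ₂ ≤ α) :
    vsAngle v (Λ₁ ⊓ Λ₂) ≤ 10 * α := by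
  -- trivial case: intersection-bot handling via Λ₁ = ⊥ or Λ₂ = ⊥
  by_cases hbot : Λ₁ = ⊥ ∨ Λ₂ = ⊥
  · have hinf : Λ₁ ⊓ Λ₂ = ⊥ := by
      rcases hbot with h | h <;> simp [h]
    have hempty : {θ : ℝ | ∃ w ∈ Λ₁ ⊓ Λ₂, w ≠ 0 ∧ θ = InnerProductGeometry.angle v w} = ∅ := by
      ext θ
      simp only [Set.mem_setOf_eq, Set.mem_empty_iff_false, iff_false, not_exists]
      rintro w ⟨hw, hw0, _⟩
      rw [hinf, Submodule.mem_bot] at hw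
      exact hw0 hw
    unfold vsAngle
    rw [hempty, Real.sInf_empty]
    positivity
  push_neg at hbot
  obtain ⟨hb1, hb2⟩ := hbot
  -- v ≠ 0
  by_cases hv0 : v = 0
  · exfalso
    obtain ⟨w₀, hw₀, hw₀0⟩ := (Submodule.ne_bot_iff Λ₁).mp hb1
    have hge : Real.pi / 2 ≤ vsAngle v Λ₁ := by
      refine le_csInf ⟨InnerProductGeometry.angle v w₀, w₀, hw₀, hw₀0, rfl⟩ ?_
      rintro θ ⟨w, hw, hww0, rfl⟩
      rw [hv0, InnerProductGeometry.angle_zero_left]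
    linarith [Real.pi_gt_three]
  obtain ⟨u, a, b, c, hab, hbc, hcd, ⟨hli, hspan⟩, hon1, hsp1, hon2, hsp2, hA2, hB1⟩ := hao
  set B : Submodule ℝ (Pt d) :=
    Submodule.span ℝ {x | ∃ i : Fin d, a ≤ i.val ∧ i.val < b ∧ x = u i} with hBdef
  set C₂ : Submodule ℝ (Pt d) :=
    Submodule.span ℝ {x | ∃ i : Fin d, b ≤ i.val ∧ i.val < c ∧ x = u i} with hCdef
  have hBΛ₁ : B ≤ Λ₁ := by
    rw [hBdef, ← hsp1]
    apply Submodule.span_mono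
    rintro x ⟨i, hi1, hi2, rfl⟩
    exact ⟨i, hi2, rfl⟩
  have hBΛ₂ : B ≤ Λ₂ := by
    rw [hBdef, ← hsp2]
    apply Submodule.span_mono
    rintro x ⟨i, hi1, hi2, rfl⟩
    exact ⟨i, hi1, lt_of_lt_of_le hi2 hbc, rfl⟩
  have hC2sub : C₂ ≤ Submodule.span ℝ {x | ∃ i : Fin d, b ≤ i.val ∧ x = u i} := by
    rw [hCdef]
    apply Submodule.span_mono
    rintro x ⟨i, hi1, hi2, rfl⟩
    exact ⟨i, hi1, rfl⟩
  have hBC : ∀ p ∈ B, ∀ q ∈ C₂, ⟪p, q⟫ = 0 := by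
    have : B ⟂ C₂ := by
      rw [hBdef, hCdef, Submodule.isOrtho_span]
      rintro _ ⟨i, hi1, hi2, rfl⟩ _ ⟨j, hj1, hj2, rfl⟩
      rw [hon2 i j hi1 (lt_of_lt_of_le hi2 hbc) (le_trans hab hj1) hj2, if_neg]
      rintro rfl
      omega
    exact fun p hp q hq => this.inner_eq hp hq
  have hsup : Λ₂ ≤ B ⊔ C₂ := by
    rw [← hsp2]
    apply Submodule.span_le.mpr
    rintro x ⟨i, hi1, hi2, rfl⟩
    by_cases hib : i.val < b
    · exact Submodule.mem_sup_left (Submodule.subset_span ⟨i, hi1, hib, rfl⟩)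
    · exact Submodule.mem_sup_right (Submodule.subset_span ⟨i, le_of_not_gt hib, hi2, rfl⟩)
  -- projections
  set x : Pt d := (Submodule.orthogonalProjectionOnto Λ₁ v : Pt d) with hxdef
  set y : Pt d := (Submodule.orthogonalProjectionOnto Λ₂ v : Pt d) with hydef
  set w : Pt d := (Submodule.orthogonalProjectionOnto B v : Pt d) with hwdef
  have hvx : ‖v - x‖ ≤ α * ‖v‖ := proj_close Λ₁ hb1 v hv0 hα hα' h₁
  have hvy : ‖v - y‖ ≤ α * ‖v‖ := proj_close Λ₂ hb2 v hv0 hα hα' h₂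
  have hxΛ : x ∈ Λ₁ := SetLike.coe_mem _
  have hyΛ : y ∈ Λ₂ := SetLike.coe_mem _
  have hwB : w ∈ B := SetLike.coe_mem _
  have hP1 : ∀ z ∈ Λ₁, ⟪v - x, z⟫ = 0 := Submodule.starProjection_inner_eq_zero v
  have hP2 : ∀ z ∈ Λ₂, ⟪v - y, z⟫ = 0 := Submodule.starProjection_inner_eq_zero v
  have hPB : ∀ z ∈ B, ⟪v - w, z⟫ = 0 := Submodule.starProjection_inner_eq_zero v
  set xA : Pt d := x - w with hxAdef
  have hxA1 : xA ∈ Λ₁ := Submodule.sub_mem _ hxΛ (hBΛ₁ hwB)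
  have hxAB : ∀ z ∈ B, ⟪xA, z⟫ = 0 := by
    intro z hz
    have h1 : ⟪v - x, z⟫ = 0 := hP1 z (hBΛ₁ hz)
    have h2 : ⟪v - w, z⟫ = 0 := hPB z hz
    have h3 : xA = (v - w) - (v - x) := by rw [hxAdef]; abel
    rw [h3, inner_sub_left, h1, h2]
    ring
  obtain ⟨yB, hyB, yC, hyC, hysum⟩ := Submodule.mem_sup.mp (hsup hyΛ)
  have hyByC : ⟪yB, yC⟫ = 0 := hBC yB hyB yC hyC
  have hwyC : ⟪w, yC⟫ = 0 := hBC w hwB yC hyC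
  have hvpos : (0:ℝ) < ‖v‖ := norm_pos_iff.mpr hv0
  set e : ℝ := α * ‖v‖ with hedef
  have hepos : 0 < e := by positivity
  have hxy : ‖x - y‖ ≤ 2 * e := by
    have : x - y = -(v - x) + (v - y) := by abel
    rw [this]
    calc ‖-(v - x) + (v - y)‖ ≤ ‖-(v - x)‖ + ‖v - y‖ := norm_add_le _ _
      _ = ‖v - x‖ + ‖v - y‖ := by rw [norm_neg]
      _ ≤ 2 * e := by linarith
  -- |⟪yC, xA⟫| ≤ (1/100) ‖yC‖ ‖xA‖
  have hyCxA : |⟪yC, xA⟫| ≤ (1 / 100) * (‖yC‖ * ‖xA‖) :=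
    near_orth hB1 (hC2sub hyC) hxA1
  -- step 1 : ‖xA‖ ≤ 2e + (1/100)‖yC‖
  have hxA_sq : ‖xA‖ ^ 2 ≤ (2 * e + (1 / 100) * ‖yC‖) * ‖xA‖ := by
    have h1 : ⟪xA, xA⟫ = ‖xA‖ ^ 2 := real_inner_self_eq_norm_sq xA
    have h2 : ⟪w, xA⟫ = 0 := by rw [real_inner_comm]; exact hxAB w hwB
    have h3 : ⟪yB, xA⟫ = 0 := by rw [real_inner_comm]; exact hxAB yB hyB
    have h4 : ⟪x, xA⟫ = ‖xA‖ ^ 2 := by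
      have : x = xA + w := by rw [hxAdef]; abel
      rw [this, inner_add_left, h2, h1]; ring
    have h5 : ⟪x, xA⟫ = ⟪x - y, xA⟫ + ⟪yB, xA⟫ + ⟪yC, xA⟫ := by
      rw [← hysum, inner_sub_left, inner_add_left]; ring
    have h6 : ⟪x - y, xA⟫ ≤ ‖x - y‖ * ‖xA‖ := real_inner_le_norm _ _
    have h7 : ‖x - y‖ * ‖xA‖ ≤ (2 * e) * ‖xA‖ :=
      mul_le_mul_of_nonneg_right hxy (norm_nonneg _)
    have h8 : ⟪yC, xA⟫ ≤ (1 / 100) * (‖yC‖ * ‖xA‖) := le_trans (le_abs_self _) hyCxA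
    linarith
  have hxA_le : ‖xA‖ ≤ 2 * e + (1 / 100) * ‖yC‖ := by
    rcases eq_or_lt_of_le (norm_nonneg xA) with h0 | h0
    · rw [← h0]; positivity
    · refine le_of_mul_le_mul_right ?_ h0
      nlinarith [hxA_sq]
  -- step 2 : ‖yC‖ ≤ 2e + (1/100)‖xA‖
  have hyC_sq : ‖yC‖ ^ 2 ≤ (2 * e + (1 / 100) * ‖xA‖) * ‖yC‖ := by
    have h1 : ⟪yC, yC⟫ = ‖yC‖ ^ 2 := real_inner_self_eq_norm_sq yC
    have h4 : ⟪y, yC⟫ = ‖yC‖ ^ 2 := by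
      rw [← hysum, inner_add_left, hyByC, h1]; ring
    have h5 : ⟪y, yC⟫ = ⟪y - x, yC⟫ + ⟪xA, yC⟫ + ⟪w, yC⟫ := by
      have : x = xA + w := by rw [hxAdef]; abel
      rw [this]
      rw [inner_sub_left, inner_add_left]
      ring
    have h6 : ⟪y - x, yC⟫ ≤ ‖y - x‖ * ‖yC‖ := real_inner_le_norm _ _
    have h7 : ‖y - x‖ * ‖yC‖ ≤ (2 * e) * ‖yC‖ := by
      rw [norm_sub_rev]
      exact mul_le_mul_of_nonneg_right hxy (norm_nonneg _)
    have h8 : ⟪xA, yC⟫ ≤ (1 / 100) * (‖yC‖ * ‖xA‖) := by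
      rw [real_inner_comm]
      exact le_trans (le_abs_self _) hyCxA
    linarith
  have hyC_le : ‖yC‖ ≤ 2 * e + (1 / 100) * ‖xA‖ := by
    rcases eq_or_lt_of_le (norm_nonneg yC) with h0 | h0
    · rw [← h0]; positivity
    · refine le_of_mul_le_mul_right ?_ h0
      nlinarith [hyC_sq]
  have hxA_final : ‖xA‖ ≤ 2.03 * e := by
    linarith [norm_nonneg xA, norm_nonneg yC, hepos.le]
  -- ‖v - w‖² ≤ 5.13 e²
  have hvw_orth : ⟪v - x, xA⟫ = 0 := hP1 xA hxA1
  have hvw_split : v - w = (v - x) + xA := by rw [hxAdef]; abel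
  have hvw_sq : ‖v - w‖ ^ 2 ≤ 5.13 * e ^ 2 := by
    have h1 : ‖v - w‖ ^ 2 = ‖v - x‖ ^ 2 + 2 * ⟪v - x, xA⟫ + ‖xA‖ ^ 2 := by
      rw [hvw_split]; exact norm_add_sq_real _ _
    rw [hvw_orth] at h1
    have s1 : ‖v - x‖ ^ 2 ≤ e ^ 2 := by nlinarith [norm_nonneg (v - x), hepos.le]
    have s2 : ‖xA‖ ^ 2 ≤ (2.03 * e) ^ 2 := by nlinarith [norm_nonneg xA, hepos.le]
    nlinarith [sq_nonneg e]
  -- pythagoras for w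
  have hpyth : ‖v‖ ^ 2 = ‖w‖ ^ 2 + ‖v - w‖ ^ 2 := by
    have h0 : ⟪w, v - w⟫ = 0 := by rw [real_inner_comm]; exact hPB w hwB
    have hv : v = w + (v - w) := by abel
    calc ‖v‖ ^ 2 = ‖w + (v - w)‖ ^ 2 := by rw [← hv]
      _ = ‖w‖ ^ 2 + 2 * ⟪w, v - w⟫ + ‖v - w‖ ^ 2 := norm_add_sq_real _ _
      _ = ‖w‖ ^ 2 + ‖v - w‖ ^ 2 := by rw [h0]; ring
  have hwpos : (0:ℝ) < ‖w‖ := by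
    have hα2 : α ^ 2 ≤ 1 / 9 := by nlinarith
    have he2 : e ^ 2 = α ^ 2 * ‖v‖ ^ 2 := by rw [hedef]; ring
    have h3 : α ^ 2 * ‖v‖ ^ 2 ≤ (1 / 9) * ‖v‖ ^ 2 :=
      mul_le_mul_of_nonneg_right hα2 (sq_nonneg ‖v‖)
    have h2 : ‖w‖ ^ 2 > 0 := by
      have := pow_pos hvpos 2
      linarith
    nlinarith [norm_nonneg w]
  have hw0 : w ≠ 0 := norm_pos_iff.mp hwpos
  -- inner v w = ‖w‖²
  have hvw_inner : ⟪v, w⟫ = ‖w‖ ^ 2 := by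
    have h0 : ⟪v - w, w⟫ = 0 := hPB w hwB
    have h1 : ⟪v, w⟫ = ⟪v - w, w⟫ + ⟪w, w⟫ := by rw [inner_sub_left]; ring
    rw [h1, h0, real_inner_self_eq_norm_sq]; ring
  set θ : ℝ := InnerProductGeometry.angle v w with hθdef
  have hcosθ : Real.cos θ = ‖w‖ / ‖v‖ := by
    rw [hθdef, InnerProductGeometry.cos_angle, hvw_inner]
    field_simp
  have hθ0 : 0 ≤ θ := InnerProductGeometry.angle_nonneg _ _
  have hθpi : θ ≤ Real.pi := InnerProductGeometry.angle_le_pi _ _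
  have hcospos : 0 < Real.cos θ := by rw [hcosθ]; positivity
  have hθhalf : θ ≤ Real.pi / 2 := by
    by_contra hcon
    push_neg at hcon
    have := Real.cos_nonpos_of_pi_div_two_le_of_le hcon.le (by linarith [Real.pi_pos])
    linarith
  -- final angle bound
  have hfin : vsAngle v (Λ₁ ⊓ Λ₂) ≤ θ := by
    apply csInf_le (vsAngle_bddBelow v _)
    exact ⟨w, Submodule.mem_inf.mpr ⟨hBΛ₁ hwB, hBΛ₂ hwB⟩, hw0, rfl⟩
  by_cases h10 : Real.pi / 2 ≤ 10 * α
  · linarith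
  push_neg at h10
  -- sin² θ ≤ 5.13 α²
  have hsinθ0 : 0 ≤ Real.sin θ := Real.sin_nonneg_of_nonneg_of_le_pi hθ0 hθpi
  have hsinθ_sq : Real.sin θ ^ 2 ≤ (5.13 * α ^ 2) := by
    have h1 : Real.sin θ ^ 2 = 1 - Real.cos θ ^ 2 := by
      have := Real.sin_sq_add_cos_sq θ
      linarith
    have hc2 : Real.cos θ ^ 2 * ‖v‖ ^ 2 = ‖w‖ ^ 2 := by
      rw [hcosθ, div_pow]
      field_simp
    have he2 : e ^ 2 = α ^ 2 * ‖v‖ ^ 2 := by rw [hedef]; ring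
    have hsv : Real.sin θ ^ 2 * ‖v‖ ^ 2 ≤ (5.13 * α ^ 2) * ‖v‖ ^ 2 := by
      rw [h1]
      have e1 : (1 - Real.cos θ ^ 2) * ‖v‖ ^ 2 = ‖v‖ ^ 2 - ‖w‖ ^ 2 := by
        have : Real.cos θ ^ 2 * ‖v‖ ^ 2 = ‖w‖ ^ 2 := hc2
        linarith [hc2]
      rw [e1]
      have e2 : (5.13 * α ^ 2) * ‖v‖ ^ 2 = 5.13 * e ^ 2 := by rw [he2]; ring
      rw [e2]
      linarith [hpyth, hvw_sq]
    exact le_of_mul_le_mul_right hsv (pow_pos hvpos 2)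
  have hsinθ : Real.sin θ ≤ 6 * α := by
    nlinarith [hsinθ_sq, hsinθ0, hα, sq_nonneg (Real.sin θ + 6 * α)]
  have hsin10 : 6 * α ≤ Real.sin (10 * α) := by
    have hms := Real.mul_le_sin (x := 10 * α) (by positivity) h10.le
    have h63 : 6 * α ≤ 2 / Real.pi * (10 * α) := by
      rw [div_mul_eq_mul_div, le_div_iff₀ Real.pi_pos]
      nlinarith [Real.pi_lt_d2]
    linarith
  have hθle : θ ≤ 10 * α := by
    by_contra hcon
    push_neg at hcon
    have := Real.sin_lt_sin_of_lt_of_le_pi_div_two (by linarith [Real.pi_pos]) hθhalf hcon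
    linarith
  linarith

end
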